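/- arXiv:1801.07640 — 2 statements merged into one kernel-verified Lean document; each statement's English description precedes it below -/
import Mathlib

section
/- (Thicket Sauer-Shelah Lemma) Let (X, F) be a set system of thicket dimension k. Then for every binary element tree of height n with labels from X, the number of leaves that are properly labeled by some member of F is at most ∑_{i=0}^{k} C(n,i). -/
/-- A binary element tree of height `n` with labels from `X` is (the restriction to binary
sequences of length `< n` of) a function `T : 2^{<ω} → X`.  A leaf `τ : 2^n` is properly
labeled by `A ⊆ X` if for all `m < n`, the label at the initial segment `τ|_{[m]}` belongs
to `A` iff `τ(m) = 1`. -/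
def ProperlyLabeled {X : Type*} (T : List Bool → X) {n : ℕ} (τ : Fin n → Bool)
    (A : Set X) : Prop :=
  ∀ m : Fin n, (T ((List.ofFn τ).take m.1) ∈ A ↔ τ m = true)

/-- The set system `F` has thicket dimension `k`: there is a binary element tree of height `k`
in which every leaf is properly labeled by some member of `F`, and no such tree of
height `k+1`. -/
def ThicketDimEq {X : Type*} (F : Set (Set X)) (k : ℕ) : Prop :=
  (∃ T : List Bool → X, ∀ τ : Fin k → Bool, ∃ A ∈ F, ProperlyLabeled T τ A) ∧
    ∀ m : ℕ, k < m →
      ¬ ∃ T : List Bool → X, ∀ τ : Fin m → Bool, ∃ A ∈ F, ProperlyLabeled T τ A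

def Shatters {X : Type*} (F : Set (Set X)) (m : ℕ) : Prop :=
  ∃ T : List Bool → X, ∀ τ : Fin m → Bool, ∃ A ∈ F, ProperlyLabeled T τ A

lemma pl_tail {X : Type*} (T : List Bool → X) {n : ℕ} (τ : Fin (n+1) → Bool) (A : Set X)
    (h : ProperlyLabeled T τ A) :
    ProperlyLabeled (fun l => T (τ 0 :: l)) (Fin.tail τ) A := by
  intro m
  have h2 := h m.succ
  rw [List.ofFn_succ] at h2
  simp only [Fin.val_succ, List.take_succ_cons] at h2
  exact h2

lemma pl_head {X : Type*} (T : List Bool → X) {n : ℕ} (τ : Fin (n+1) → Bool) (A : Set X)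
    (h : ProperlyLabeled T τ A) : (T [] ∈ A ↔ τ 0 = true) := by
  have h2 := h 0
  simpa using h2

lemma pascal_sum (n : ℕ) : ∀ j : ℕ, ∑ i ∈ Finset.range (j+1), (n+1).choose i
    = ∑ i ∈ Finset.range (j+1), n.choose i + ∑ i ∈ Finset.range j, n.choose i := by
  intro j
  induction j with
  | zero => simp
  | succ j ih =>
    rw [Finset.sum_range_succ, ih, Nat.choose_succ_succ, Finset.sum_range_succ n.choose (j+1),
      Finset.sum_range_succ n.choose j]
    simp only [Nat.succ_eq_add_one]
    omega

def consb {n : ℕ} (b : Bool) (σ : Fin n → Bool) : Fin (n+1) → Bool := Fin.cons b σ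

set_option maxHeartbeats 1000000 in
lemma key {X : Type*} : ∀ (n k : ℕ) (F : Set (Set X)) (T : List Bool → X),
    ¬ Shatters F k →
    {τ : Fin n → Bool | ∃ A ∈ F, ProperlyLabeled T τ A}.ncard ≤
      ∑ i ∈ Finset.range k, n.choose i := by
  intro n
  induction n with
  | zero =>
    intro k F T h
    match k with
    | 0 =>
      rw [Finset.sum_range_zero]
      convert Nat.zero_le 0
      rw [Set.ncard_eq_zero (Set.toFinite _)]
      by_contra hne
      obtain ⟨τ, A, hA, _⟩ := Set.nonempty_iff_ne_empty.2 hne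
      exact h ⟨T, fun τ' => ⟨A, hA, fun m => m.elim0⟩⟩
    | (j+1) =>
      calc {τ : Fin 0 → Bool | ∃ A ∈ F, ProperlyLabeled T τ A}.ncard
          ≤ (Set.univ : Set (Fin 0 → Bool)).ncard :=
            Set.ncard_le_ncard (Set.subset_univ _) (Set.toFinite _)
        _ = 1 := by rw [Set.ncard_univ]; simp [Nat.card_eq_fintype_card]
        _ ≤ ∑ i ∈ Finset.range (j+1), Nat.choose 0 i := by
            rw [Finset.sum_range_succ']; simp
  | succ n ih =>
    intro k F T h
    match k with
    | 0 =>
      rw [Finset.sum_range_zero]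
      convert Nat.zero_le 0
      rw [Set.ncard_eq_zero (Set.toFinite _)]
      by_contra hne
      obtain ⟨τ, A, hA, _⟩ := Set.nonempty_iff_ne_empty.2 hne
      exact h ⟨T, fun τ' => ⟨A, hA, fun m => m.elim0⟩⟩
    | (j+1) =>
      set x := T []
      set F0 : Set (Set X) := {A ∈ F | x ∉ A} with hF0
      set F1 : Set (Set X) := {A ∈ F | x ∈ A} with hF1
      set T0 : List Bool → X := fun l => T (false :: l) with hT0
      set T1 : List Bool → X := fun l => T (true :: l) with hT1
      set S0 := {σ : Fin n → Bool | ∃ A ∈ F0, ProperlyLabeled T0 σ A} with hS0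
      set S1 := {σ : Fin n → Bool | ∃ A ∈ F1, ProperlyLabeled T1 σ A} with hS1
      -- inclusion
      have hincl : {τ : Fin (n+1) → Bool | ∃ A ∈ F, ProperlyLabeled T τ A} ⊆
          (consb false '' S0) ∪ (consb true '' S1) := by
        rintro τ ⟨A, hA, hPL⟩
        have hhead := pl_head T τ A hPL
        have htail := pl_tail T τ A hPL
        cases hb : τ 0 with
        | false =>
          left
          refine ⟨Fin.tail τ, ⟨A, ⟨hA, ?_⟩, ?_⟩, ?_⟩
          · rw [hb] at hhead; simp at hhead; exact hhead
          · rw [hb] at htail; exact htail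
          · rw [← hb]; exact Fin.cons_self_tail τ
        | true =>
          right
          refine ⟨Fin.tail τ, ⟨A, ⟨hA, ?_⟩, ?_⟩, ?_⟩
          · rw [hb] at hhead; exact hhead.2 rfl
          · rw [hb] at htail; exact htail
          · rw [← hb]; exact Fin.cons_self_tail τ
      -- subfamilies don't shatter height j+1
      have hsub0 : ¬ Shatters F0 (j+1) := by
        rintro ⟨S, hS⟩
        exact h ⟨S, fun τ => by obtain ⟨A, hA, hp⟩ := hS τ; exact ⟨A, hA.1, hp⟩⟩
      have hsub1 : ¬ Shatters F1 (j+1) := by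
        rintro ⟨S, hS⟩
        exact h ⟨S, fun τ => by obtain ⟨A, hA, hp⟩ := hS τ; exact ⟨A, hA.1, hp⟩⟩
      -- not both shatter height j
      have hor : ¬ Shatters F0 j ∨ ¬ Shatters F1 j := by
        by_contra hc
        push_neg at hc
        obtain ⟨⟨W0, hW0⟩, ⟨W1, hW1⟩⟩ := hc
        apply h
        refine ⟨fun l => match l with | [] => x | (b :: l') => if b then W1 l' else W0 l', ?_⟩
        intro τ
        cases hb : τ 0 with
        | false =>
          obtain ⟨A, hA, hp⟩ := hW0 (Fin.tail τ)
          refine ⟨A, hA.1, ?_⟩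
          intro m
          induction m using Fin.cases with
          | zero => simpa [hb] using hA.2
          | succ i =>
            have h2 := hp i
            rw [List.ofFn_succ]
            simp only [Fin.val_succ, List.take_succ_cons, hb]
            simpa [Fin.tail_def] using h2
        | true =>
          obtain ⟨A, hA, hp⟩ := hW1 (Fin.tail τ)
          refine ⟨A, hA.1, ?_⟩
          intro m
          induction m using Fin.cases with
          | zero => simpa [hb] using hA.2
          | succ i =>
            have h2 := hp i
            rw [List.ofFn_succ]
            simp only [Fin.val_succ, List.take_succ_cons, hb]
            simpa [Fin.tail_def] using h2
      -- counting
      have hcount : {τ : Fin (n+1) → Bool | ∃ A ∈ F, ProperlyLabeled T τ A}.ncard ≤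
          S0.ncard + S1.ncard := by
        calc {τ : Fin (n+1) → Bool | ∃ A ∈ F, ProperlyLabeled T τ A}.ncard
            ≤ ((consb false '' S0) ∪ (consb true '' S1)).ncard :=
              Set.ncard_le_ncard hincl (Set.toFinite _)
          _ ≤ (consb false '' S0).ncard + (consb true '' S1).ncard :=
              Set.ncard_union_le _ _
          _ ≤ S0.ncard + S1.ncard :=
              Nat.add_le_add (Set.ncard_image_le (Set.toFinite _))
                (Set.ncard_image_le (Set.toFinite _))
      rw [pascal_sum]
      rw [hS0, hS1] at hcount
      cases hor with
      | inl h0 =>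
        have := ih j F0 T0 h0
        have := ih (j+1) F1 T1 hsub1
        omega
      | inr h1 =>
        have := ih (j+1) F0 T0 hsub0
        have := ih j F1 T1 h1
        omega


/-- Thicket Sauer-Shelah Lemma: if `F` has thicket dimension `k`, then in any binary element
tree of height `n` the number of leaves properly labeled by some member of `F` is at most
`∑_{i=0}^{k} C(n,i)`. -/
theorem thicket_sauer_shelah {X : Type*} (F : Set (Set X)) (k : ℕ)
    (hdim : ThicketDimEq F k) (n : ℕ) (T : List Bool → X) :
    {τ : Fin n → Bool | ∃ A ∈ F, ProperlyLabeled T τ A}.ncard ≤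
      ∑ i ∈ Finset.range (k + 1), n.choose i := by
  exact key n (k+1) F T (hdim.2 (k+1) (Nat.lt_succ_self k))
end

section
/- Fix r, s ≥ 1, b ≥ 0, and let a₀ = ∑_{i=0}^{r−1} C(s,i) and a₁ = 2^s − a₀. Then for every n ≥ 0, every set system (X, F) with opR_r(F) ≤ b, and every 2^s-ary element tree of height n with labels from X, the number of leaves properly labeled by members of F is at most ∑_{i=0}^{b} C(n,i) · a₀^{n−i} · a₁^{i}; that is, ψ^s_{r,b}(n) ≤ ∑_{i=0}^{b} C(n,i) a₀^{n−i} a₁^{i}. -/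
/-- A leaf `ξ ∈ (2^s)^n` of a `2^s`-ary element tree `T` is properly labeled by `A ⊆ X`
if for all `j < n` and `i < s`, the `i`-th coordinate of the label of the initial segment
`ξ|_{[j]}` belongs to `A` iff `ξ(j)(i) = 1`. -/
def OpProper {X : Type*} {s : ℕ} (T : List (Fin s → Bool) → (Fin s → X)) {n : ℕ}
    (ξ : Fin n → (Fin s → Bool)) (A : Set X) : Prop :=
  ∀ (j : Fin n) (i : Fin s), (T ((List.ofFn ξ).take j.1) i ∈ A ↔ ξ j i = true)

/-- There is a `2^s`-ary element tree of height `k` with labels from `X` in which every leaf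
is properly labeled by some member of `F`. -/
def HasOpTree {X : Type*} (F : Set (Set X)) (s k : ℕ) : Prop :=
  ∃ T : List (Fin s → Bool) → (Fin s → X),
    ∀ ξ : Fin k → (Fin s → Bool), ∃ A ∈ F, OpProper T ξ A

open Finset

lemma sauer_step {r s : ℕ} (hr : 1 ≤ r) (E : Finset (Fin s → Bool))
    (hE : ∑ j ∈ Finset.range r, s.choose j < E.card) :
    ∃ emb : Fin r → Fin s, Function.Injective emb ∧
      ∀ δ : Fin r → Bool, ∃ ε ∈ E, ∀ i, ε (emb i) = δ i := by
  classical
  set toSet : (Fin s → Bool) → Finset (Fin s) := fun ε => univ.filter (fun i => ε i = true)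
    with htoSet
  have hinj : Function.Injective toSet := by
    intro ε ε' h
    funext i
    have := Finset.ext_iff.1 h i
    simp only [htoSet, mem_filter, mem_univ, true_and] at this
    cases hb : ε i <;> cases hb' : ε' i <;> simp_all
  set 𝒜 : Finset (Finset (Fin s)) := E.image toSet with h𝒜
  have hcard : 𝒜.card = E.card := Finset.card_image_of_injective _ hinj
  have h1 : E.card ≤ 𝒜.shatterer.card := hcard ▸ Finset.card_le_card_shatterer 𝒜
  have hex : ∃ I, 𝒜.Shatters I ∧ r ≤ I.card := by
    by_contra hcon
    push_neg at hcon
    have hvc : 𝒜.vcDim ≤ r - 1 := by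
      refine Finset.sup_le fun I hI => ?_
      have := hcon I (mem_shatterer.1 hI)
      omega
    have h2 : 𝒜.shatterer.card ≤ ∑ k ∈ Finset.Iic 𝒜.vcDim, s.choose k := by
      simpa using Finset.card_shatterer_le_sum_vcDim (𝒜 := 𝒜)
    have h3 : ∑ k ∈ Finset.Iic 𝒜.vcDim, s.choose k ≤ ∑ j ∈ Finset.range r, s.choose j := by
      apply Finset.sum_le_sum_of_subset
      intro k hk
      simp only [mem_Iic] at hk
      simp only [mem_range]
      omega
    omega
  obtain ⟨I, hIsh, hIr⟩ := hex
  obtain ⟨I', hI'sub, hI'card⟩ := Finset.exists_subset_card_eq hIr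
  have hsh' : 𝒜.Shatters I' := hIsh.mono_right hI'sub
  refine ⟨I'.orderEmbOfFin hI'card, (I'.orderEmbOfFin hI'card).injective, fun δ => ?_⟩
  set f := I'.orderEmbOfFin hI'card
  have hmem : ∀ i, f i ∈ I' := fun i => I'.orderEmbOfFin_mem hI'card i
  have hBsub : (univ.filter (fun i => δ i = true)).image f ⊆ I' := by
    intro x hx
    simp only [mem_image] at hx
    obtain ⟨i, _, rfl⟩ := hx
    exact hmem i
  obtain ⟨u, hu𝒜, huB⟩ := hsh' hBsub
  simp only [h𝒜, mem_image] at hu𝒜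
  obtain ⟨ε, hεE, rfl⟩ := hu𝒜
  refine ⟨ε, hεE, fun i => ?_⟩
  have hiff : ε (f i) = true ↔ δ i = true := by
    constructor
    · intro h
      have : f i ∈ I' ∩ toSet ε := by
        simp only [mem_inter, htoSet, mem_filter, mem_univ, true_and]
        exact ⟨hmem i, h⟩
      rw [huB] at this
      simp only [mem_image, mem_filter, mem_univ, true_and] at this
      obtain ⟨i', hδ, hfi⟩ := this
      rwa [f.injective hfi] at hδ
    · intro h
      have : f i ∈ (univ.filter (fun i => δ i = true)).image f := by
        simp only [mem_image]
        exact ⟨i, by simp [h], rfl⟩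
      rw [← huB] at this
      simp only [mem_inter, htoSet, mem_filter, mem_univ, true_and] at this
      exact this.2
  cases hδ : δ i <;> simp [hδ] at hiff ⊢ <;> simp [hiff]

lemma hasOpTree_mono {X : Type*} {F G : Set (Set X)} (h : F ⊆ G) {s k : ℕ} :
    HasOpTree F s k → HasOpTree G s k := by
  rintro ⟨T, hT⟩
  exact ⟨T, fun ξ => let ⟨A, hA, hp⟩ := hT ξ; ⟨A, h hA, hp⟩⟩

lemma ofFn_cons {α : Type*} {n : ℕ} (ε : α) (ξ : Fin n → α) :
    List.ofFn (Fin.cons ε ξ) = ε :: List.ofFn ξ := by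
  rw [List.ofFn_succ]
  simp

lemma opProper_cons {X : Type*} {s n : ℕ} (T : List (Fin s → Bool) → (Fin s → X))
    (ε : Fin s → Bool) (ξ : Fin n → (Fin s → Bool)) (A : Set X) :
    OpProper T (Fin.cons ε ξ) A ↔
      (∀ i, T [] i ∈ A ↔ ε i = true) ∧ OpProper (fun L => T (ε :: L)) ξ A := by
  constructor
  · intro h
    constructor
    · intro i
      have := h 0 i
      simpa [ofFn_cons] using this
    · intro j i
      have := h j.succ i
      simpa [ofFn_cons] using this
  · rintro ⟨h0, h1⟩ j i
    refine Fin.cases ?_ (fun j => ?_) j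
    · simpa [ofFn_cons] using h0 i
    · simpa [ofFn_cons] using h1 j i

lemma build_tree {X : Type*} {s r b : ℕ} (F : Set (Set X))
    (T : List (Fin s → Bool) → (Fin s → X)) (E : Finset (Fin s → Bool))
    (hE : ∀ ε ∈ E, HasOpTree {A ∈ F | ∀ i, (T [] i ∈ A ↔ ε i = true)} r b)
    (emb : Fin r → Fin s)
    (hsh : ∀ δ : Fin r → Bool, ∃ ε ∈ E, ∀ i, ε (emb i) = δ i) :
    HasOpTree F r (b + 1) := by
  classical
  choose εf hεfE hεfδ using hsh
  choose Tf hTf using fun δ => hE (εf δ) (hεfE δ)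
  refine ⟨fun L => match L with
    | [] => fun i => T [] (emb i)
    | δ :: L' => Tf δ L', fun ξ => ?_⟩
  obtain ⟨A, hA, hp⟩ := hTf (ξ 0) (Fin.tail ξ)
  refine ⟨A, hA.1, ?_⟩
  rw [← Fin.cons_self_tail ξ, opProper_cons]
  refine ⟨fun i => ?_, hp⟩
  rw [hA.2 (emb i), hεfδ (ξ 0) i]

def psi (a0 a1 n b : ℕ) : ℕ := ∑ i ∈ Finset.range (b + 1), n.choose i * a0 ^ (n - i) * a1 ^ i

lemma psi_zero (a0 a1 n : ℕ) : psi a0 a1 n 0 = a0 ^ n := by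
  simp [psi]

lemma psi_mono (a0 a1 n : ℕ) {b b' : ℕ} (h : b ≤ b') : psi a0 a1 n b ≤ psi a0 a1 n b' := by
  apply Finset.sum_le_sum_of_subset
  exact Finset.range_subset_range.2 (by omega)

lemma psi_one (a0 a1 b : ℕ) : psi a0 a1 0 b = 1 := by
  unfold psi
  rw [Finset.sum_eq_single 0]
  · simp
  · intro i _ h0
    rw [Nat.choose_eq_zero_of_lt (by omega)]
    simp
  · intro h
    simp at h

lemma psi_succ (a0 a1 n b : ℕ) :
    psi a0 a1 (n + 1) (b + 1) = a0 * psi a0 a1 n (b + 1) + a1 * psi a0 a1 n b := by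
  have term : ∀ i : ℕ, n.choose (i + 1) * a0 ^ (n - i) =
      a0 * (n.choose (i + 1) * a0 ^ (n - (i + 1))) := by
    intro i
    rcases le_or_gt (i + 1) n with h | h
    · have : n - i = (n - (i + 1)) + 1 := by omega
      rw [this, pow_succ]
      ring
    · rw [Nat.choose_eq_zero_of_lt h]
      simp
  unfold psi
  rw [Finset.sum_range_succ' (fun i => (n+1).choose i * a0 ^ (n + 1 - i) * a1 ^ i) (b+1)]
  rw [Finset.sum_range_succ' (fun i => n.choose i * a0 ^ (n - i) * a1 ^ i) (b+1)]
  simp only [Nat.choose_succ_succ, Nat.choose_zero_right, pow_zero, mul_one, Nat.sub_zero,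
    Nat.add_sub_cancel_left, add_mul, Nat.succ_eq_add_one]
  have e1 : ∑ x ∈ Finset.range (b+1),
      (n.choose x * a0 ^ (n + 1 - (x + 1)) * a1 ^ (x + 1)
        + n.choose (x+1) * a0 ^ (n + 1 - (x + 1)) * a1 ^ (x + 1))
      = a1 * (∑ i ∈ Finset.range (b+1), n.choose i * a0 ^ (n - i) * a1 ^ i)
        + a0 * (∑ k ∈ Finset.range (b+1), n.choose (k+1) * a0 ^ (n - (k+1)) * a1 ^ (k+1)) := by
    rw [Finset.sum_add_distrib, Finset.mul_sum, Finset.mul_sum]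
    congr 1
    · apply Finset.sum_congr rfl
      intro x _
      have h1 : n + 1 - (x + 1) = n - x := by omega
      rw [h1, pow_succ]
      ring
    · apply Finset.sum_congr rfl
      intro x _
      have h1 : n + 1 - (x + 1) = n - x := by omega
      rw [h1, term x]
      ring
  rw [e1, pow_succ]
  ring

lemma arith_step {e a0 t B1 B2 : ℕ} (h1 : e ≤ a0) (h2 : a0 ≤ t) (h3 : B2 ≤ B1) :
    e * B1 + (t - e) * B2 ≤ a0 * B1 + (t - a0) * B2 := by
  obtain ⟨d, rfl⟩ := Nat.exists_eq_add_of_le h1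
  have h : t - e = (t - (e + d)) + d := by omega
  rw [h]
  nlinarith

lemma a0_le_pow (r s : ℕ) : ∑ j ∈ Finset.range r, s.choose j ≤ 2 ^ s := by
  calc ∑ j ∈ Finset.range r, s.choose j
      ≤ ∑ j ∈ Finset.range (max r (s + 1)), s.choose j :=
        Finset.sum_le_sum_of_subset (Finset.range_subset_range.2 (le_max_left _ _))
    _ = ∑ j ∈ Finset.range (s + 1), s.choose j := by
        refine (Finset.sum_subset (Finset.range_subset_range.2 (le_max_right _ _)) ?_).symm
        intro x hx hnx
        simp only [Finset.mem_range] at hx hnx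
        exact Nat.choose_eq_zero_of_lt (by omega)
    _ = 2 ^ s := Nat.sum_range_choose s

set_option maxHeartbeats 1000000 in
lemma main_bound {X : Type*} (r s : ℕ) (hr : 1 ≤ r) (hs : 1 ≤ s) (n : ℕ) :
    ∀ (b : ℕ) (F : Set (Set X)) (T : List (Fin s → Bool) → (Fin s → X)),
      (∀ m : ℕ, b < m → ¬ HasOpTree F r m) →
      {ξ : Fin n → (Fin s → Bool) | ∃ A ∈ F, OpProper T ξ A}.ncard ≤
        psi (∑ j ∈ Finset.range r, s.choose j)
          (2 ^ s - ∑ j ∈ Finset.range r, s.choose j) n b := by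
  classical
  set a0 := ∑ j ∈ Finset.range r, s.choose j with ha0
  set a1 := 2 ^ s - a0 with ha1
  have hconv : ∀ (m : ℕ) (S : Set (Fin m → Fin s → Bool)),
      S.ncard = (Finset.univ.filter (· ∈ S)).card := by
    intro m S
    rw [← Set.ncard_coe_finset]
    congr 1
    ext ξ
    simp
  induction n with
  | zero =>
    intro b F T hrank
    rw [psi_one]
    calc {ξ : Fin 0 → (Fin s → Bool) | ∃ A ∈ F, OpProper T ξ A}.ncard
        ≤ (Set.univ : Set (Fin 0 → Fin s → Bool)).ncard :=
          Set.ncard_le_ncard (Set.subset_univ _) Set.finite_univ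
      _ = 1 := by
          rw [Set.ncard_univ]
          simp [Nat.card_eq_fintype_card]
  | succ n IH =>
    intro b F T hrank
    set Fsub : (Fin s → Bool) → Set (Set X) :=
      fun ε => {A ∈ F | ∀ i, (T [] i ∈ A ↔ ε i = true)} with hFsubdef
    set Tsub : (Fin s → Bool) → List (Fin s → Bool) → (Fin s → X) :=
      fun ε L => T (ε :: L) with hTsubdef
    have hFsubF : ∀ ε, Fsub ε ⊆ F := fun ε A hA => hA.1
    set Sgood : (Fin s → Bool) → Set (Fin n → Fin s → Bool) :=
      fun ε => {ξ' | ∃ A ∈ Fsub ε, OpProper (Tsub ε) ξ' A} with hSgooddef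
    set E : Finset (Fin s → Bool) :=
      Finset.univ.filter (fun ε => HasOpTree (Fsub ε) r b) with hEdef
    have hEcard : E.card ≤ a0 := by
      by_contra hcon
      push_neg at hcon
      obtain ⟨emb, hembinj, hsh⟩ := sauer_step hr E hcon
      have hall : ∀ ε ∈ E, HasOpTree {A ∈ F | ∀ i, (T [] i ∈ A ↔ ε i = true)} r b :=
        fun ε hε => (Finset.mem_filter.1 hε).2
      exact hrank (b + 1) (by omega) (build_tree F T E hall emb hsh)
    set B2 : ℕ := if b = 0 then 0 else psi a0 a1 n (b - 1) with hB2def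
    have hB2le : B2 ≤ psi a0 a1 n b := by
      by_cases hb : b = 0
      · simp [hB2def, hb]
      · rw [hB2def, if_neg hb]
        exact psi_mono a0 a1 n (by omega)
    have hbound1 : ∀ ε, (Sgood ε).ncard ≤ psi a0 a1 n b := by
      intro ε
      apply IH b (Fsub ε) (Tsub ε)
      intro m hm hTree
      exact hrank m (by omega) (hasOpTree_mono (hFsubF ε) hTree)
    have hbound2 : ∀ ε ∉ E, (Sgood ε).ncard ≤ B2 := by
      intro ε hε
      simp only [hEdef, Finset.mem_filter, Finset.mem_univ, true_and] at hε
      by_cases hb : b = 0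
      · subst hb
        have hempty : Sgood ε = ∅ := by
          rw [Set.eq_empty_iff_forall_notMem]
          intro ξ' hξ'
          obtain ⟨A, hA, -⟩ := hξ'
          exact hε ⟨fun _ _ => T [] ⟨0, hs⟩, fun ξ => ⟨A, hA, fun j i => j.elim0⟩⟩
        simp [hempty, hB2def]
      · rw [hB2def, if_neg hb]
        obtain ⟨b', rfl⟩ : ∃ b', b = b' + 1 := ⟨b - 1, by omega⟩
        simp only [Nat.add_sub_cancel]
        apply IH b' (Fsub ε) (Tsub ε)
        intro m hm hTree
        rcases eq_or_lt_of_le (Nat.succ_le_of_lt hm) with h | h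
        · exact hε (by rwa [← h] at hTree)
        · exact hrank m (by omega) (hasOpTree_mono (hFsubF ε) hTree)
    have hcardP : Fintype.card (Fin s → Bool) = 2 ^ s := by simp
    set consm : (Fin s → Bool) → (Fin n → (Fin s → Bool)) → (Fin (n+1) → (Fin s → Bool)) :=
      fun ε ξ' => Fin.cons ε ξ' with hconsm
    have hconsinj : ∀ ε, Function.Injective (consm ε) := by
      intro ε ξ₁ ξ₂ h
      simpa [hconsm] using congrArg Fin.tail h
    set Gset : Finset (Fin (n+1) → Fin s → Bool) :=
      Finset.univ.filter (· ∈ {ξ : Fin (n+1) → Fin s → Bool | ∃ A ∈ F, OpProper T ξ A})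
      with hGset
    set bigf : (Fin s → Bool) → Finset (Fin (n+1) → Fin s → Bool) :=
      fun ε => (Finset.univ.filter (· ∈ Sgood ε)).image (consm ε) with hbigf
    have hsubset : Gset ⊆ Finset.univ.biUnion bigf := by
      intro ξ hξ
      simp only [hGset, Finset.mem_filter, Finset.mem_univ, true_and, Set.mem_setOf_eq] at hξ
      obtain ⟨A, hA, hp⟩ := hξ
      rw [← Fin.cons_self_tail ξ, opProper_cons] at hp
      refine Finset.mem_biUnion.2 ⟨ξ 0, Finset.mem_univ _, ?_⟩
      simp only [hbigf]
      refine Finset.mem_image.2 ⟨Fin.tail ξ, ?_, ?_⟩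
      · simp only [Finset.mem_filter, Finset.mem_univ, true_and, hSgooddef, Set.mem_setOf_eq]
        exact ⟨A, ⟨hA, hp.1⟩, hp.2⟩
      · simp only [hconsm]
        exact Fin.cons_self_tail ξ
    calc {ξ : Fin (n+1) → Fin s → Bool | ∃ A ∈ F, OpProper T ξ A}.ncard
        = Gset.card := hconv _ _
      _ ≤ (Finset.univ.biUnion bigf).card := Finset.card_le_card hsubset
      _ ≤ ∑ ε ∈ Finset.univ, (bigf ε).card := Finset.card_biUnion_le
      _ = ∑ ε ∈ Finset.univ, (Sgood ε).ncard := by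
          refine Finset.sum_congr rfl fun ε _ => ?_
          rw [hbigf]
          rw [Finset.card_image_of_injective _ (hconsinj ε), hconv]
      _ ≤ ∑ ε ∈ Finset.univ, (if ε ∈ E then psi a0 a1 n b else B2) := by
          refine Finset.sum_le_sum fun ε _ => ?_
          by_cases h : ε ∈ E
          · simpa [h] using hbound1 ε
          · simpa [h] using hbound2 ε h
      _ = E.card * psi a0 a1 n b + (2 ^ s - E.card) * B2 := by
          rw [Finset.sum_ite, Finset.sum_const, Finset.sum_const]
          have h1 : Finset.univ.filter (fun x => x ∈ E) = E := by
            ext x; simp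
          have h2 : Finset.univ.filter (fun x => x ∉ E) = Eᶜ := by
            ext x; simp
          rw [h1, h2, Finset.card_compl, hcardP, smul_eq_mul, smul_eq_mul]
      _ ≤ a0 * psi a0 a1 n b + a1 * B2 := by
          rw [ha1]
          exact arith_step hEcard (ha0 ▸ a0_le_pow r s) hB2le
      _ ≤ psi a0 a1 (n + 1) b := by
          by_cases hb : b = 0
          · subst hb
            simp only [hB2def, if_pos rfl, mul_zero, add_zero, psi_zero, pow_succ]
            ring_nf
            exact le_refl _
          · obtain ⟨b', rfl⟩ : ∃ b', b = b' + 1 := ⟨b - 1, by omega⟩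
            rw [hB2def, if_neg hb]
            simp only [Nat.add_sub_cancel]
            rw [psi_succ]


/-- Fix `r, s ≥ 1` and `b ≥ 0`, and let `a₀ = ∑_{i=0}^{r−1} C(s,i)`, `a₁ = 2^s − a₀`.
For every `n`, every set system `(X, F)` with `opR_r(F) ≤ b`, and every `2^s`-ary element
tree of height `n` with labels from `X`, the number of leaves properly labeled by members of
`F` is at most `∑_{i=0}^{b} C(n,i)·a₀^{n−i}·a₁^{i}`; that is,
`ψ^s_{r,b}(n) ≤ ∑_{i=0}^{b} C(n,i) a₀^{n−i} a₁^{i}`. -/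
theorem op_rank_bounded_shatter {X : Type*} (r s b : ℕ) (hr : 1 ≤ r) (hs : 1 ≤ s)
    (F : Set (Set X)) (hrank : ∀ m : ℕ, b < m → ¬ HasOpTree F r m)
    (n : ℕ) (T : List (Fin s → Bool) → (Fin s → X)) :
    {ξ : Fin n → (Fin s → Bool) | ∃ A ∈ F, OpProper T ξ A}.ncard ≤
      ∑ i ∈ Finset.range (b + 1),
        n.choose i * (∑ j ∈ Finset.range r, s.choose j) ^ (n - i) *
          (2 ^ s - ∑ j ∈ Finset.range r, s.choose j) ^ i := by
  exact main_bound r s hr hs n b F T hrank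
end
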